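/- Let B be a finite Blaschke product of degree n, M ≠ id a Möbius transformation of the disc with B ∘ M = B, k the order of M, and γ ∈ 𝔻 a fixed point of M. Then B can be written as B = B₂ ∘ B₁ where B₁(z) = ((z - γ)/(1 - \bar{γ}z))^k is a Blaschke product of degree k and B₂ is a finite Blaschke product of degree n/k. -/

import Mathlib

open Complex

open Polynomial

lemma one_sub_ne (x y : ℂ) (hx : ‖x‖ < 1) (hy : ‖y‖ ≤ 1) :
    1 - x * y ≠ 0 := by
  intro h
  have : x * y = 1 := by linear_combination -h
  have h1 : ‖(x * y)‖ = 1 := by rw [this, norm_one]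
  rw [norm_mul] at h1
  nlinarith [norm_nonneg x, norm_nonneg y]

lemma abs_phi_lt (γ a : ℂ) (hγ : ‖γ‖ < 1) (ha : ‖a‖ < 1) :
    ‖((a - γ) / (1 - (starRingEnd ℂ) γ * a))‖ < 1 := by
  have hd : (1 : ℂ) - (starRingEnd ℂ) γ * a ≠ 0 := by
    apply one_sub_ne _ _ (by rwa [Complex.norm_conj]) ha.le
  rw [norm_div, div_lt_one (norm_pos_iff.mpr hd)]
  have h2 : ‖(a - γ)‖ ^ 2 < ‖(1 - (starRingEnd ℂ) γ * a)‖ ^ 2 := by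
    rw [← Complex.normSq_eq_norm_sq, ← Complex.normSq_eq_norm_sq]
    have e1 : Complex.normSq (a - γ) = Complex.normSq a - 2*(a * (starRingEnd ℂ) γ).re + Complex.normSq γ := by
      simp [Complex.normSq_sub, Complex.normSq_apply, Complex.mul_re, Complex.conj_re, Complex.conj_im]
      ring
    have e2 : Complex.normSq (1 - (starRingEnd ℂ) γ * a) = 1 - 2*(a * (starRingEnd ℂ) γ).re + Complex.normSq γ * Complex.normSq a := by
      simp [Complex.normSq_sub, Complex.normSq_apply, Complex.mul_re, Complex.conj_re, Complex.conj_im]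
      ring
    have h3 : (1 - ‖γ‖ ^ 2) * (1 - ‖a‖ ^ 2) > 0 := by
      apply mul_pos <;> nlinarith [norm_nonneg γ, norm_nonneg a]
    rw [e1, e2]
    rw [← Complex.sq_norm, ← Complex.sq_norm] at *
    nlinarith
  nlinarith [norm_nonneg (a - γ), norm_nonneg (1 - (starRingEnd ℂ) γ * a)]



lemma factor_eq (γ a z : ℂ) (hγ : ‖γ‖ < 1) (ha : ‖a‖ < 1)
    (hz : ‖z‖ < 1) :
    (z - a) / (1 - (starRingEnd ℂ) a * z)
      = ((1 - (starRingEnd ℂ) γ * a) / (1 - γ * (starRingEnd ℂ) a)) *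
        (((z - γ) / (1 - (starRingEnd ℂ) γ * z) - (a - γ) / (1 - (starRingEnd ℂ) γ * a)) /
         (1 - (starRingEnd ℂ) ((a - γ) / (1 - (starRingEnd ℂ) γ * a)) *
           ((z - γ) / (1 - (starRingEnd ℂ) γ * z)))) := by
  have hγ' : ‖((starRingEnd ℂ) γ)‖ < 1 := by rwa [Complex.norm_conj]
  have ha' : ‖((starRingEnd ℂ) a)‖ < 1 := by rwa [Complex.norm_conj]
  have d1 : 1 - (starRingEnd ℂ) a * z ≠ 0 := one_sub_ne _ _ ha' hz.le
  have d2 : 1 - (starRingEnd ℂ) γ * z ≠ 0 := one_sub_ne _ _ hγ' hz.le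
  have d3 : 1 - (starRingEnd ℂ) γ * a ≠ 0 := one_sub_ne _ _ hγ' ha.le
  have d3' : 1 - γ * (starRingEnd ℂ) a ≠ 0 := one_sub_ne _ _ hγ ha'.le
  have d5 : 1 - γ * (starRingEnd ℂ) γ ≠ 0 := one_sub_ne _ _ hγ hγ'.le
  rw [map_div₀, map_sub, map_sub, map_one, map_mul, Complex.conj_conj]
  have hA : (z - γ) / (1 - (starRingEnd ℂ) γ * z) - (a - γ) / (1 - (starRingEnd ℂ) γ * a)
      = ((z - a) * (1 - γ * (starRingEnd ℂ) γ)) /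
        ((1 - (starRingEnd ℂ) γ * z) * (1 - (starRingEnd ℂ) γ * a)) := by
    rw [div_sub_div _ _ d2 d3]
    congr 1
    ring
  have hB : 1 - ((starRingEnd ℂ) a - (starRingEnd ℂ) γ) / (1 - γ * (starRingEnd ℂ) a) *
        ((z - γ) / (1 - (starRingEnd ℂ) γ * z))
      = ((1 - γ * (starRingEnd ℂ) γ) * (1 - (starRingEnd ℂ) a * z)) /
        ((1 - γ * (starRingEnd ℂ) a) * (1 - (starRingEnd ℂ) γ * z)) := by
    rw [div_mul_div_comm, eq_div_iff (mul_ne_zero d3' d2), sub_mul, one_mul, div_mul_cancel₀ _ (mul_ne_zero d3' d2)]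
    ring
  rw [hA, hB]
  rw [div_div_div_eq, div_mul_div_comm, div_eq_div_iff d1 (mul_ne_zero d3' (mul_ne_zero (mul_ne_zero d2 d3) (mul_ne_zero d5 d1)))]
  ring



lemma conj_rot (e α γ z : ℂ) (he : ‖e‖ = 1) (hα : ‖α‖ < 1)
    (hγ : ‖γ‖ < 1) (hz : ‖z‖ < 1)
    (hfix : e * (γ - α) / (1 - (starRingEnd ℂ) α * γ) = γ) :
    (e * (z - α) / (1 - (starRingEnd ℂ) α * z) - γ) /
      (1 - (starRingEnd ℂ) γ * (e * (z - α) / (1 - (starRingEnd ℂ) α * z)))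
    = ((e + (starRingEnd ℂ) α * γ) / (1 + e * α * (starRingEnd ℂ) γ)) *
      ((z - γ) / (1 - (starRingEnd ℂ) γ * z)) := by
  have hα' : ‖((starRingEnd ℂ) α)‖ < 1 := by rwa [Complex.norm_conj]
  have hγ' : ‖((starRingEnd ℂ) γ)‖ < 1 := by rwa [Complex.norm_conj]
  have d1 : 1 - (starRingEnd ℂ) α * z ≠ 0 := one_sub_ne _ _ hα' hz.le
  have d2 : 1 - (starRingEnd ℂ) γ * z ≠ 0 := one_sub_ne _ _ hγ' hz.le
  have d3 : 1 - (starRingEnd ℂ) α * γ ≠ 0 := one_sub_ne _ _ hα' hγ.le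
  have hee : e * (starRingEnd ℂ) e = 1 := by
    rw [Complex.mul_conj]; norm_cast; rw [Complex.normSq_eq_norm_sq, he]; norm_num
  have d4 : 1 + e * α * (starRingEnd ℂ) γ ≠ 0 := by
    have h' : 1 + e * α * (starRingEnd ℂ) γ = 1 - (-(e*α)) * (starRingEnd ℂ) γ := by ring
    rw [h']
    apply one_sub_ne _ _ _ hγ'.le
    rw [norm_neg, norm_mul, he, one_mul]; exact hα
  have hMz : ‖(e * (z - α) / (1 - (starRingEnd ℂ) α * z))‖ < 1 := by
    rw [mul_div_assoc, norm_mul, he, one_mul]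
    exact abs_phi_lt α z hα hz
  have d5 : 1 - (starRingEnd ℂ) γ * (e * (z - α) / (1 - (starRingEnd ℂ) α * z)) ≠ 0 :=
    one_sub_ne _ _ hγ' hMz.le
  have hfe : e * (γ - α) = γ * (1 - (starRingEnd ℂ) α * γ) := by
    rw [div_eq_iff d3] at hfix; linear_combination hfix
  have hfe' : (starRingEnd ℂ) e * ((starRingEnd ℂ) γ - (starRingEnd ℂ) α)
      = (starRingEnd ℂ) γ * (1 - α * (starRingEnd ℂ) γ) := by
    have h2 := congrArg (starRingEnd ℂ) hfe
    simpa [map_mul, map_sub, map_one] using h2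
  -- rewrite LHS as a single fraction
  have hnum : e * (z - α) / (1 - (starRingEnd ℂ) α * z) - γ
      = (e * (z - α) - γ * (1 - (starRingEnd ℂ) α * z)) / (1 - (starRingEnd ℂ) α * z) := by
    rw [eq_div_iff d1, sub_mul, div_mul_cancel₀ _ d1]
  have hden : 1 - (starRingEnd ℂ) γ * (e * (z - α) / (1 - (starRingEnd ℂ) α * z))
      = ((1 - (starRingEnd ℂ) α * z) - (starRingEnd ℂ) γ * (e * (z - α))) / (1 - (starRingEnd ℂ) α * z) := by
    rw [eq_div_iff d1, sub_mul, one_mul, mul_div_assoc', div_mul_cancel₀ _ d1]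
  have d6 : (1 - (starRingEnd ℂ) α * z) - (starRingEnd ℂ) γ * (e * (z - α)) ≠ 0 := by
    intro h
    apply d5
    rw [hden, h, zero_div]
  rw [hnum, hden, div_div_div_eq, mul_comm (e * (z - α) - γ * (1 - (starRingEnd ℂ) α * z)) (1 - (starRingEnd ℂ) α * z), mul_div_mul_left _ _ d1]
  rw [div_mul_div_comm, div_eq_div_iff d6 (mul_ne_zero d4 d2)]
  linear_combination (1 + e*α*(starRingEnd ℂ) γ) * (1 - (starRingEnd ℂ) γ * z) * hfe
    - (e + (starRingEnd ℂ) α * γ) * (z - γ) * z * e * hfe'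
    + (e + (starRingEnd ℂ) α * γ) * (z - γ) * z * ((starRingEnd ℂ) γ - (starRingEnd ℂ) α) * hee


-- ∏_{t<k} (x - λ^t * s) = x^k - s^k
lemma prod_lin {k : ℕ} (hk : 0 < k) {lam : ℂ} (hlam : IsPrimitiveRoot lam k) (s x : ℂ) :
    ∏ t ∈ Finset.range k, (x - lam ^ t * s) = x ^ k - s ^ k := by
  have hroots : Polynomial.nthRoots k (s ^ k) = (Multiset.range k).map (lam ^ · * s) :=
    hlam.nthRoots_eq rfl
  have hmonic : (X ^ k - C (s ^ k)).Monic := monic_X_pow_sub_C _ hk.ne'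
  have hcard : Multiset.card (X ^ k - C (s ^ k)).roots = (X ^ k - C (s ^ k)).natDegree := by
    rw [natDegree_X_pow_sub_C, ← nthRoots, hroots, Multiset.card_map, Multiset.card_range]
  have hp := prod_multiset_X_sub_C_of_monic_of_roots_card_eq hmonic hcard
  have := congrArg (Polynomial.eval x) hp
  rw [eval_multiset_prod, ← nthRoots, hroots] at this
  rw [Multiset.map_map] at this
  simp only [Function.comp, eval_sub, eval_X, eval_C, eval_pow] at this
  rw [← this]
  rw [Finset.prod_eq_multiset_prod]
  simp [Finset.range_val]

lemma prod_one_sub {k : ℕ} (hk : 0 < k) {mu : ℂ} (hmu : IsPrimitiveRoot mu k) (u : ℂ) :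
    ∏ t ∈ Finset.range k, (1 - mu ^ t * u) = 1 - u ^ k := by
  rcases eq_or_ne u 0 with rfl | hu
  · simp [zero_pow hk.ne']
  · have h1 : ∀ t, 1 - mu ^ t * u = u * (u⁻¹ - mu ^ t * 1) := by
      intro t; field_simp
    simp_rw [h1]
    rw [Finset.prod_mul_distrib, Finset.prod_const, Finset.card_range,
      prod_lin hk hmu 1 u⁻¹, one_pow]
    rw [mul_sub, ← mul_pow, mul_inv_cancel₀ hu, one_pow, mul_one]



lemma ball_infinite : ({w : ℂ | w ∈ Metric.ball (0:ℂ) 1}).Infinite := by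
  apply Set.infinite_of_injective_forall_mem (f := fun n : ℕ => (((n+2 : ℕ) : ℂ))⁻¹)
  · intro m n h
    simp only [inv_inj, Nat.cast_inj] at h
    omega
  · intro n
    simp only [Set.mem_setOf_eq, Metric.mem_ball, dist_zero_right, norm_inv]
    rw [Complex.norm_natCast]
    rw [inv_lt_one_iff₀]
    right
    exact_mod_cast by omega

open Classical in
lemma blaschke_unique {S₁ S₂ : Multiset ℂ}
    (h1 : ∀ s ∈ S₁, ‖s‖ < 1) (h2 : ∀ s ∈ S₂, ‖s‖ < 1)
    {c₁ c₂ : ℂ} (hc₁ : c₁ ≠ 0) (hc₂ : c₂ ≠ 0)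
    (heq : ∀ w ∈ Metric.ball (0:ℂ) 1,
      c₁ * (S₁.map (fun s => (w - s) / (1 - (starRingEnd ℂ) s * w))).prod
        = c₂ * (S₂.map (fun s => (w - s) / (1 - (starRingEnd ℂ) s * w))).prod) :
    S₁ = S₂ ∧ c₁ = c₂ := by
  -- polynomials
  set P₁ : Polynomial ℂ := (S₁.map (fun s => X - C s)).prod with hP₁
  set P₂ : Polynomial ℂ := (S₂.map (fun s => X - C s)).prod with hP₂
  set Q₁ : Polynomial ℂ := (S₁.map (fun s => 1 - C ((starRingEnd ℂ) s) * X)).prod with hQ₁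
  set Q₂ : Polynomial ℂ := (S₂.map (fun s => 1 - C ((starRingEnd ℂ) s) * X)).prod with hQ₂
  have evalP : ∀ (S : Multiset ℂ) (w : ℂ),
      Polynomial.eval w ((S.map (fun s => X - C s)).prod) = (S.map (fun s => w - s)).prod := by
    intro S w
    rw [eval_multiset_prod, Multiset.map_map]
    simp [Function.comp]
  have evalQ : ∀ (S : Multiset ℂ) (w : ℂ),
      Polynomial.eval w ((S.map (fun s => 1 - C ((starRingEnd ℂ) s) * X)).prod)
        = (S.map (fun s => 1 - (starRingEnd ℂ) s * w)).prod := by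
    intro S w
    rw [eval_multiset_prod, Multiset.map_map]
    simp [Function.comp]
  have evalQne : ∀ (S : Multiset ℂ), (∀ s ∈ S, ‖s‖ < 1) → ∀ w : ℂ,
      ‖w‖ < 1 → (S.map (fun s => 1 - (starRingEnd ℂ) s * w)).prod ≠ 0 := by
    intro S hS w hw h
    rw [Multiset.prod_eq_zero_iff] at h
    obtain ⟨x, hx, hx0⟩ := Multiset.mem_map.mp h
    exact one_sub_ne _ _ (by rw [Complex.norm_conj]; exact hS x hx) hw.le hx0
  -- from function equality to polynomial equality
  have hpoly : C c₁ * (P₁ * Q₂) = C c₂ * (P₂ * Q₁) := by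
    apply Polynomial.eq_of_infinite_eval_eq
    apply Set.Infinite.mono _ ball_infinite
    intro w hw
    simp only [Set.mem_setOf_eq] at hw ⊢
    have hw' : ‖w‖ < 1 := by
      rwa [Metric.mem_ball, dist_zero_right] at hw
    have h := heq w hw
    rw [Multiset.prod_map_div, Multiset.prod_map_div] at h
    have n1 := evalQne S₁ h1 w hw'
    have n2 := evalQne S₂ h2 w hw'
    rw [mul_div_assoc'] at h
    rw [mul_div_assoc'] at h
    rw [div_eq_div_iff n1 n2] at h
    simp only [eval_mul, eval_C, hP₁, hP₂, hQ₁, hQ₂, evalP, evalQ]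
    linear_combination h
  -- nonvanishing of the polynomials
  have hPne : ∀ S : Multiset ℂ, ((S.map (fun s => X - C s)).prod : Polynomial ℂ) ≠ 0 := by
    intro S
    apply Polynomial.Monic.ne_zero
    apply Polynomial.monic_multiset_prod_of_monic
    intro s _
    exact monic_X_sub_C s
  have hQne : ∀ (S : Multiset ℂ), (∀ s ∈ S, ‖s‖ < 1) →
      ((S.map (fun s => 1 - C ((starRingEnd ℂ) s) * X)).prod : Polynomial ℂ) ≠ 0 := by
    intro S hS hzero
    have h0 := evalQ S 0
    rw [hzero] at h0
    simp only [eval_zero] at h0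
    have : (Multiset.map (fun s => 1 - (starRingEnd ℂ) s * 0) S).prod = 1 := by
      simp
    rw [this] at h0
    exact one_ne_zero h0.symm
  have rootsQ : ∀ (S : Multiset ℂ), (∀ s ∈ S, ‖s‖ < 1) →
      ∀ x ∈ ((S.map (fun s => 1 - C ((starRingEnd ℂ) s) * X)).prod : Polynomial ℂ).roots,
        ¬ ‖x‖ < 1 := by
    intro S hS x hx hlt
    rw [Polynomial.mem_roots (hQne S hS)] at hx
    have hev : (Multiset.map (fun s => 1 - (starRingEnd ℂ) s * x) S).prod = 0 := by
      rw [← evalQ S x]; exact hx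
    exact evalQne S hS x hlt hev
  -- roots multiset equation
  have hro : S₁ + Q₂.roots = S₂ + Q₁.roots := by
    have h := congrArg Polynomial.roots hpoly
    rw [Polynomial.roots_C_mul _ hc₁, Polynomial.roots_C_mul _ hc₂,
      Polynomial.roots_mul (mul_ne_zero (hPne S₁) (hQne S₂ h2)),
      Polynomial.roots_mul (mul_ne_zero (hPne S₂) (hQne S₁ h1)),
      Polynomial.roots_multiset_prod_X_sub_C,
      Polynomial.roots_multiset_prod_X_sub_C] at h
    exact h
  have hfil := congrArg (Multiset.filter (fun x => ‖x‖ < 1)) hro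
  rw [Multiset.filter_add, Multiset.filter_add,
    Multiset.filter_eq_self.mpr h1, Multiset.filter_eq_self.mpr h2,
    Multiset.filter_eq_nil.mpr (rootsQ S₂ h2), Multiset.filter_eq_nil.mpr (rootsQ S₁ h1),
    add_zero, add_zero] at hfil
  refine ⟨hfil, ?_⟩
  rw [hP₁, hP₂, hQ₁, hQ₂, hfil] at hpoly
  have hcan := mul_right_cancel₀ (mul_ne_zero (hPne S₂) (hQne S₂ h2)) hpoly
  exact Polynomial.C_injective hcan



open Classical in
lemma orbit_decomp {k : ℕ} (hk : 0 < k) {lam : ℂ} (hlam : IsPrimitiveRoot lam k)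
    (habs : ‖lam‖ = 1) :
    ∀ (q : ℕ) (S : Multiset ℂ), Multiset.card S = k * q →
    (∀ s ∈ S, ‖s‖ < 1) →
    S.map (fun s => lam⁻¹ * s) = S →
    ∃ T : Multiset ℂ, Multiset.card T = q ∧ (∀ b ∈ T, ‖b‖ < 1) ∧
      ∀ w : ℂ, ‖w‖ < 1 →
        (S.map (fun s => (w - s) / (1 - (starRingEnd ℂ) s * w))).prod
          = (T.map (fun b => (w ^ k - b) / (1 - (starRingEnd ℂ) b * w ^ k))).prod := by
  have hlne : lam ≠ 0 := hlam.ne_zero hk.ne'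
  have h1 : lam * lam ^ (k-1) = 1 := by
    rw [← pow_succ', show k-1+1 = k by omega, hlam.pow_eq_one]
  have hinveq : lam⁻¹ = lam ^ (k-1) := inv_eq_of_mul_eq_one_right h1
  have hfinj : Function.Injective (fun s : ℂ => lam⁻¹ * s) :=
    fun x y h => by simpa [inv_ne_zero hlne] using h
  intro q
  induction q with
  | zero =>
    intro S hcard _ _
    refine ⟨0, rfl, by simp, ?_⟩
    intro w _
    have : S = 0 := Multiset.card_eq_zero.mp (by omega)
    simp [this]
  | succ q ih =>
    intro S hcard hS hinv
    by_cases hex : ∃ s ∈ S, s ≠ 0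
    · obtain ⟨s, hsS, hs0⟩ := hex
      -- counts are constant along the orbit
      have hcnt : ∀ v : ℂ, Multiset.count (lam⁻¹ * v) S = Multiset.count v S := by
        intro v
        conv_lhs => rw [← hinv]
        exact Multiset.count_map_eq_count' _ S hfinj v
      have hg : ∀ t : ℕ, Multiset.count (lam ^ t * s) S = Multiset.count s S := by
        intro t
        induction t with
        | zero => simp
        | succ t iht =>
          have := hcnt (lam ^ (t+1) * s)
          rw [show lam⁻¹ * (lam ^ (t+1) * s) = lam ^ t * s by
            field_simp; ring] at this
          omega
      -- the orbit
      set O : Multiset ℂ := (Finset.range k).val.map (fun t => lam ^ t * s) with hO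
      have hOnodup : O.Nodup := by
        rw [hO, ← Finset.image_val_of_injOn (hlam.injOn_pow_mul hs0)]
        exact (Finset.image _ _).nodup
      have hOcard : Multiset.card O = k := by simp [hO]
      have hmemO : ∀ x ∈ O, ∃ t, t < k ∧ x = lam ^ t * s := by
        intro x hx
        rw [hO, Multiset.mem_map] at hx
        obtain ⟨t, ht, rfl⟩ := hx
        rw [Finset.range_val, Multiset.mem_range] at ht
        exact ⟨t, ht, rfl⟩
      have hOS : O ≤ S := by
        rw [Multiset.le_iff_count]
        intro x
        by_cases hx : x ∈ O
        · obtain ⟨t, -, rfl⟩ := hmemO x hx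
          rw [Multiset.count_eq_one_of_mem hOnodup hx, hg t]
          exact Multiset.one_le_count_iff_mem.mpr hsS
        · rw [Multiset.count_eq_zero_of_notMem hx]
          omega
      set S' : Multiset ℂ := S - O with hS'
      have hsum : S' + O = S := tsub_add_cancel_of_le hOS
      have hS'S : S' ≤ S := Multiset.sub_le_self S O
      have hcard' : Multiset.card S' = k * q := by
        have h2 := congrArg Multiset.card hsum
        rw [Multiset.card_add] at h2
        have h3 : k*(q+1) = k*q + k := by ring
        omega
      -- O is invariant under multiplication by lam⁻¹
      have hOinv : O.map (fun s => lam⁻¹ * s) = O := by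
        apply Multiset.eq_of_le_of_card_le
        · rw [Multiset.le_iff_count]
          intro x
          by_cases hx : x ∈ O.map (fun s => lam⁻¹ * s)
          · have hxO : x ∈ O := by
              rw [Multiset.mem_map] at hx
              obtain ⟨y, hy, rfl⟩ := hx
              obtain ⟨t, htk, rfl⟩ := hmemO y hy
              rcases eq_or_ne t 0 with rfl | ht
              · have heq0 : lam⁻¹ * (lam ^ 0 * s) = lam ^ (k-1) * s := by
                  rw [hinveq, pow_zero, one_mul]
                rw [heq0, hO]
                apply Multiset.mem_map.mpr
                exact ⟨k-1, by rw [Finset.range_val, Multiset.mem_range]; omega, rfl⟩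
              · have hpt : lam ^ t = lam * lam ^ (t-1) := by
                  rw [← pow_succ', show t-1+1 = t by omega]
                have heq1 : lam⁻¹ * (lam ^ t * s) = lam ^ (t-1) * s := by
                  rw [hpt, mul_assoc, inv_mul_cancel_left₀ hlne]
                rw [heq1, hO]
                apply Multiset.mem_map.mpr
                refine ⟨t-1, ?_, rfl⟩
                rw [Finset.range_val, Multiset.mem_range]; omega
            rw [Multiset.count_eq_one_of_mem (hOnodup.map hfinj) hx]
            rw [Multiset.count_eq_one_of_mem hOnodup hxO]
          · rw [Multiset.count_eq_zero_of_notMem hx]; omega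
        · simp [hOcard]
      -- S' is invariant
      have hS'inv : S'.map (fun s => lam⁻¹ * s) = S' := by
        have h4 : S'.map (fun s => lam⁻¹ * s) + O = S' + O := by
          conv_lhs => rw [← hOinv, ← Multiset.map_add, hsum]
          rw [hinv]
          exact hsum.symm
        exact add_right_cancel h4
      obtain ⟨T', hT'card, hT'abs, hT'prod⟩ :=
        ih S' hcard' (fun x hx => hS x (Multiset.mem_of_le hS'S hx)) hS'inv
      have hconj : (starRingEnd ℂ) lam = lam⁻¹ := by
        refine (inv_eq_of_mul_eq_one_right ?_).symm
        rw [Complex.mul_conj]; norm_cast; rw [Complex.normSq_eq_norm_sq, habs]; norm_num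
      have hconjprim : IsPrimitiveRoot ((starRingEnd ℂ) lam) k := by
        rw [hconj]; exact hlam.inv
      have habs_sk : ‖(s ^ k)‖ < 1 := by
        rw [norm_pow]
        exact pow_lt_one₀ (norm_nonneg _) (hS s hsS) hk.ne'
      refine ⟨s ^ k ::ₘ T', by simp [hT'card], ?_, ?_⟩
      · intro b hb
        rcases Multiset.mem_cons.mp hb with rfl | hb
        · exact habs_sk
        · exact hT'abs b hb
      · intro w hw
        rw [← hsum, Multiset.map_add, Multiset.prod_add,
          Multiset.map_cons, Multiset.prod_cons, hT'prod w hw]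
        have horb : (O.map (fun x => (w - x) / (1 - (starRingEnd ℂ) x * w))).prod
            = (w ^ k - s ^ k) / (1 - (starRingEnd ℂ) (s ^ k) * w ^ k) := by
          rw [hO, Multiset.map_map]
          have h5 : ((Finset.range k).val.map
              ((fun x => (w - x) / (1 - (starRingEnd ℂ) x * w)) ∘ (fun t => lam ^ t * s))).prod
              = ∏ t ∈ Finset.range k, (w - lam ^ t * s) / (1 - (starRingEnd ℂ) (lam ^ t * s) * w) := by
            rw [Finset.prod_eq_multiset_prod]
            rfl
          rw [h5, Finset.prod_div_distrib, prod_lin hk hlam s w]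
          congr 1
          have h6 : ∀ t ∈ Finset.range k,
              1 - (starRingEnd ℂ) (lam ^ t * s) * w
                = 1 - ((starRingEnd ℂ) lam) ^ t * ((starRingEnd ℂ) s * w) := by
            intro t _
            rw [map_mul, map_pow]
            ring
          rw [Finset.prod_congr rfl h6, prod_one_sub hk hconjprim]
          rw [mul_pow, map_pow]
        rw [horb]
        ring
    · -- all elements are zero
      push_neg at hex
      have hrep : S = Multiset.replicate (k*(q+1)) 0 :=
        Multiset.eq_replicate.mpr ⟨hcard, hex⟩
      refine ⟨Multiset.replicate (q+1) 0, by simp, ?_, ?_⟩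
      · intro b hb
        rw [Multiset.eq_of_mem_replicate hb]
        simp
      intro w hw
      rw [hrep, Multiset.map_replicate, Multiset.map_replicate,
        Multiset.prod_replicate, Multiset.prod_replicate]
      simp only [map_zero, sub_zero, zero_mul, mul_zero, sub_zero, div_one]
      rw [← pow_mul]


/-- If `B ∘ M = B` for a Möbius transformation `M ≠ id` of order `k` with fixed
point `γ ∈ 𝔻`, then `B = B₂ ∘ B₁` with `B₁ z = ((z - γ)/(1 - conj γ z))^k` and
`B₂` a finite Blaschke product of degree `n / k`. -/
theorem decomposition_of_invariant (n : ℕ) (c : ℂ) (hc : ‖c‖ = 1)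
    (a : Fin n → ℂ) (ha : ∀ i, ‖(a i)‖ < 1) (B : ℂ → ℂ)
    (hB : ∀ z, B z = c * ∏ i, (z - a i) / (1 - (starRingEnd ℂ) (a i) * z))
    (e α : ℂ) (he : ‖e‖ = 1) (hα : ‖α‖ < 1) (M : ℂ → ℂ)
    (hM : ∀ z, M z = e * (z - α) / (1 - (starRingEnd ℂ) α * z))
    (hne : ∃ z ∈ Metric.ball (0 : ℂ) 1, M z ≠ z)
    (hinv : ∀ z ∈ Metric.ball (0 : ℂ) 1, B (M z) = B z)
    (k : ℕ) (hk : 2 ≤ k)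
    (hord : ∀ z ∈ Metric.ball (0 : ℂ) 1, M^[k] z = z)
    (hmin : ∀ j : ℕ, 0 < j → j < k → ∃ z ∈ Metric.ball (0 : ℂ) 1, M^[j] z ≠ z)
    (γ : ℂ) (hγ : ‖γ‖ < 1) (hfix : M γ = γ) :
    k ∣ n ∧ ∃ (e' : ℂ) (b : Fin (n / k) → ℂ), ‖e'‖ = 1 ∧
      (∀ i, ‖(b i)‖ < 1) ∧
      ∀ z ∈ Metric.ball (0 : ℂ) 1,
        B z = e' * ∏ i, (((z - γ) / (1 - (starRingEnd ℂ) γ * z)) ^ k - b i) /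
          (1 - (starRingEnd ℂ) (b i) * ((z - γ) / (1 - (starRingEnd ℂ) γ * z)) ^ k) := by
  classical
  have hk0 : 0 < k := by omega
  have hball : ∀ z : ℂ, z ∈ Metric.ball (0:ℂ) 1 ↔ ‖z‖ < 1 := fun z => by
    rw [Metric.mem_ball, dist_zero_right]
  set φ : ℂ → ℂ := fun z => (z - γ) / (1 - (starRingEnd ℂ) γ * z) with hφ
  set lam : ℂ := (e + (starRingEnd ℂ) α * γ) / (1 + e * α * (starRingEnd ℂ) γ) with hlam_def
  -- M maps the ball into the ball
  have hMball : ∀ z : ℂ, ‖z‖ < 1 → ‖(M z)‖ < 1 := by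
    intro z hz
    rw [hM, mul_div_assoc, norm_mul, he, one_mul]
    exact abs_phi_lt α z hα hz
  -- conjugation identity
  have hTM : ∀ z : ℂ, ‖z‖ < 1 → φ (M z) = lam * φ z := by
    intro z hz
    rw [hφ, hM]
    exact conj_rot e α γ z he hα hγ hz (by rw [← hM]; exact hfix)
  -- |lam| = 1
  have hee : e * (starRingEnd ℂ) e = 1 := by
    rw [Complex.mul_conj]; norm_cast; rw [Complex.normSq_eq_norm_sq, he]; norm_num
  have hD : 1 + e * α * (starRingEnd ℂ) γ ≠ 0 := by
    have h' : 1 + e * α * (starRingEnd ℂ) γ = 1 - (-(e*α)) * (starRingEnd ℂ) γ := by ring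
    rw [h']
    refine one_sub_ne _ _ ?_ (by rw [Complex.norm_conj]; exact hγ.le)
    rw [norm_neg, norm_mul, he, one_mul]; exact hα
  have hlam_abs : ‖lam‖ = 1 := by
    have h1 : e + (starRingEnd ℂ) α * γ = e * (starRingEnd ℂ) (1 + e * α * (starRingEnd ℂ) γ) := by
      rw [map_add, map_one, map_mul, map_mul, Complex.conj_conj]
      linear_combination -((starRingEnd ℂ) α * γ) * hee
    rw [hlam_def, norm_div, h1, norm_mul, he, one_mul, Complex.norm_conj]
    exact div_self (norm_ne_zero_iff.mpr hD)
  have hlam_ne : lam ≠ 0 := by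
    intro h; rw [h, norm_zero] at hlam_abs; norm_num at hlam_abs
  -- iterates
  have hiter : ∀ j : ℕ, ∀ z : ℂ, ‖z‖ < 1 →
      ‖(M^[j] z)‖ < 1 ∧ φ (M^[j] z) = lam ^ j * φ z := by
    intro j
    induction j with
    | zero => intro z hz; simpa using hz
    | succ j ihj =>
      intro z hz
      obtain ⟨h1, h2⟩ := ihj z hz
      rw [Function.iterate_succ_apply']
      exact ⟨hMball _ h1, by rw [hTM _ h1, h2, pow_succ]; ring⟩
  -- injectivity of φ on the ball
  have hγ' : ‖((starRingEnd ℂ) γ)‖ < 1 := by rwa [Complex.norm_conj]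
  have hφinj : ∀ u v : ℂ, ‖u‖ < 1 → ‖v‖ < 1 → φ u = φ v → u = v := by
    intro u v hu hv h
    rw [hφ] at h
    rw [div_eq_div_iff (one_sub_ne _ _ hγ' hu.le) (one_sub_ne _ _ hγ' hv.le)] at h
    have h5 : (u - v) * (1 - γ * (starRingEnd ℂ) γ) = 0 := by linear_combination h
    rcases mul_eq_zero.mp h5 with h6 | h6
    · exact sub_eq_zero.mp h6
    · exact absurd h6 (one_sub_ne _ _ hγ hγ'.le)
  -- φ z ≠ 0 for z ≠ γ
  have hφne : ∀ z : ℂ, ‖z‖ < 1 → z ≠ γ → φ z ≠ 0 := by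
    intro z hz hzγ
    rw [hφ]
    apply div_ne_zero (sub_ne_zero.mpr hzγ)
    exact one_sub_ne _ _ (by rwa [Complex.norm_conj]) hz.le
  -- lam is a primitive k-th root of unity
  have hprim : IsPrimitiveRoot lam k := by
    set z₀ : ℂ := if γ = 0 then (1/2 : ℂ) else 0 with hz₀def
    have hz₀ : ‖z₀‖ < 1 ∧ z₀ ≠ γ := by
      rw [hz₀def]
      split_ifs with h
      · subst h
        refine ⟨?_, by norm_num⟩
        rw [show (1/2 : ℂ) = ((1/2 : ℝ) : ℂ) by norm_num, Complex.norm_real]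
        rw [Real.norm_of_nonneg (by norm_num)]
        norm_num
      · exact ⟨by simp, Ne.symm h⟩
    have hφz₀ : φ z₀ ≠ 0 := hφne z₀ hz₀.1 hz₀.2
    have hlamk : lam ^ k = 1 := by
      have h8 := (hiter k z₀ hz₀.1).2
      rw [hord z₀ ((hball z₀).2 hz₀.1)] at h8
      nth_rewrite 1 [← one_mul (φ z₀)] at h8
      exact (mul_right_cancel₀ hφz₀ h8).symm
    refine ⟨hlamk, fun l hl => ?_⟩
    have hr : lam ^ (l % k) = 1 := by
      have h7 : k * (l / k) + l % k = l := Nat.div_add_mod l k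
      calc lam ^ (l % k) = (lam ^ k) ^ (l / k) * lam ^ (l % k) := by
            rw [hlamk, one_pow, one_mul]
        _ = lam ^ l := by rw [← pow_mul, ← pow_add, h7]
        _ = 1 := hl
    rcases Nat.eq_zero_or_pos (l % k) with h9 | h9
    · exact Nat.dvd_of_mod_eq_zero h9
    · exfalso
      obtain ⟨z, hzball, hzne⟩ := hmin (l % k) h9 (Nat.mod_lt _ hk0)
      have hzb : ‖z‖ < 1 := (hball z).1 hzball
      obtain ⟨hzb2, hzeq⟩ := hiter (l % k) z hzb
      rw [hr, one_mul] at hzeq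
      exact hzne (hφinj _ _ hzb2 hzb hzeq)
  -- transformed zeros
  set S : Multiset ℂ := Finset.univ.val.map (fun i => φ (a i)) with hS
  have hScard : Multiset.card S = n := by simp [hS]
  have hSabs : ∀ s ∈ S, ‖s‖ < 1 := by
    intro s hs
    rw [hS, Multiset.mem_map] at hs
    obtain ⟨i, _, rfl⟩ := hs
    exact abs_phi_lt γ (a i) hγ (ha i)
  set c' : ℂ := c * ∏ i, ((1 - (starRingEnd ℂ) γ * a i) / (1 - γ * (starRingEnd ℂ) (a i))) with hc'
  have hfac : ∀ i, ‖((1 - (starRingEnd ℂ) γ * a i) / (1 - γ * (starRingEnd ℂ) (a i)))‖ = 1 := by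
    intro i
    have hcj : (starRingEnd ℂ) (1 - γ * (starRingEnd ℂ) (a i)) = 1 - (starRingEnd ℂ) γ * a i := by
      rw [map_sub, map_one, map_mul, Complex.conj_conj]
    rw [norm_div, ← hcj, Complex.norm_conj]
    refine div_self (norm_ne_zero_iff.mpr ?_)
    exact one_sub_ne _ _ hγ (by rw [Complex.norm_conj]; exact (ha i).le)
  have hc'_abs : ‖c'‖ = 1 := by
    rw [hc', norm_mul, hc, one_mul, norm_prod]
    exact Finset.prod_eq_one (fun i _ => hfac i)
  have hc'_ne : c' ≠ 0 := by
    intro h; rw [h, norm_zero] at hc'_abs; norm_num at hc'_abs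
  -- B in terms of φ
  have hmsprod : ∀ (g : ℂ → ℂ), (S.map g).prod = ∏ i, g (φ (a i)) := by
    intro g
    rw [hS, Multiset.map_map, ← Finset.prod_eq_multiset_prod]
    rfl
  have hBφ : ∀ z : ℂ, ‖z‖ < 1 →
      B z = c' * (S.map (fun s => (φ z - s) / (1 - (starRingEnd ℂ) s * φ z))).prod := by
    intro z hz
    rw [hB z, hmsprod, hc', mul_assoc, ← Finset.prod_mul_distrib]
    congr 1
    apply Finset.prod_congr rfl
    intro i _
    exact factor_eq γ (a i) z hγ (ha i) hz
  -- invariance of the rotated product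
  have hconjlam : (starRingEnd ℂ) lam = lam⁻¹ := by
    refine (inv_eq_of_mul_eq_one_right ?_).symm
    rw [Complex.mul_conj]; norm_cast; rw [Complex.normSq_eq_norm_sq, hlam_abs]; norm_num
  have hconjinv : (starRingEnd ℂ) lam⁻¹ = lam := by
    rw [← hconjlam, Complex.conj_conj]
  have hGinv : ∀ w : ℂ, ‖w‖ < 1 →
      c' * ((S.map (fun s => lam⁻¹ * s)).map
          (fun s => (w - s) / (1 - (starRingEnd ℂ) s * w))).prod * lam ^ n
        = c' * (S.map (fun s => (w - s) / (1 - (starRingEnd ℂ) s * w))).prod := by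
    intro w hw
    -- the preimage point z with φ z = w
    set z : ℂ := (w + γ) / (1 + (starRingEnd ℂ) γ * w) with hzdef
    have hz_eq : z = (w - -γ) / (1 - (starRingEnd ℂ) (-γ) * w) := by
      rw [hzdef, map_neg]; ring_nf
    have hzb : ‖z‖ < 1 := by
      rw [hz_eq]
      exact abs_phi_lt (-γ) w (by rwa [norm_neg]) hw
    have hdd : 1 + (starRingEnd ℂ) γ * w ≠ 0 := by
      have h' : 1 + (starRingEnd ℂ) γ * w = 1 - (starRingEnd ℂ) (-γ) * w := by
        rw [map_neg]; ring
      rw [h']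
      exact one_sub_ne _ _ (by rw [map_neg, norm_neg, Complex.norm_conj]; exact hγ) hw.le
    have hdz : 1 - (starRingEnd ℂ) γ * z ≠ 0 := one_sub_ne _ _ hγ' hzb.le
    have hφz : φ z = w := by
      rw [hφ]
      show (z - γ) / (1 - (starRingEnd ℂ) γ * z) = w
      rw [div_eq_iff hdz, hzdef]
      have hdd' : 1 + w * (starRingEnd ℂ) γ ≠ 0 := by rwa [mul_comm]
      field_simp
      ring
    -- the invariance transported
    have hBM := hinv z ((hball z).2 hzb)
    rw [hBφ z hzb, hBφ (M z) (hMball z hzb), hTM z hzb, hφz] at hBM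
    -- rewrite the rotated product
    have hpt : ∀ s : ℂ, (lam * w - s) / (1 - (starRingEnd ℂ) s * (lam * w))
        = lam * ((w - lam⁻¹ * s) / (1 - (starRingEnd ℂ) (lam⁻¹ * s) * w)) := by
      intro s
      have h1 : lam * w - s = lam * (w - lam⁻¹ * s) := by
        field_simp
      have h2 : 1 - (starRingEnd ℂ) s * (lam * w) = 1 - (starRingEnd ℂ) (lam⁻¹ * s) * w := by
        rw [map_mul, hconjinv]; ring
      rw [h1, h2, mul_div_assoc]
    have hmap1 : (S.map (fun s => (lam * w - s) / (1 - (starRingEnd ℂ) s * (lam * w)))).prod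
        = lam ^ n * ((S.map (fun s => lam⁻¹ * s)).map
            (fun s => (w - s) / (1 - (starRingEnd ℂ) s * w))).prod := by
      rw [Multiset.map_congr rfl (fun s _ => hpt s)]
      rw [show (fun s => lam * ((w - lam⁻¹ * s) / (1 - (starRingEnd ℂ) (lam⁻¹ * s) * w)))
          = (fun s => (fun _ => lam) s * ((fun t => (w - t) / (1 - (starRingEnd ℂ) t * w)) ∘ (fun t => lam⁻¹ * t)) s) by rfl]
      rw [Multiset.prod_map_mul, Multiset.map_const', Multiset.prod_replicate, hScard,
        ← Multiset.map_map]
    rw [hmap1] at hBM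
    linear_combination hBM
  -- S is invariant and lam ^ n = 1
  have hkey : S.map (fun s => lam⁻¹ * s) = S ∧ lam ^ n = 1 := by
    have hS1abs : ∀ s ∈ S.map (fun s => lam⁻¹ * s), ‖s‖ < 1 := by
      intro s hs
      rw [Multiset.mem_map] at hs
      obtain ⟨t, ht, rfl⟩ := hs
      rw [norm_mul, norm_inv, hlam_abs]
      simpa using hSabs t ht
    obtain ⟨h1, h2⟩ := blaschke_unique hS1abs hSabs
      (mul_ne_zero hc'_ne (pow_ne_zero _ hlam_ne)) hc'_ne
      (fun w hw => by
        have := hGinv w ((hball w).1 hw)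
        linear_combination this)
    refine ⟨h1, ?_⟩
    have h3 : c' * lam ^ n = c' * 1 := by rw [mul_one]; exact h2
    exact mul_left_cancel₀ hc'_ne h3
  have hdvd : k ∣ n := hprim.dvd_of_pow_eq_one n hkey.2
  -- orbit decomposition
  obtain ⟨T, hTcard, hTabs, hTprod⟩ := orbit_decomp hk0 hprim hlam_abs (n / k) S
    (by rw [hScard]; exact (Nat.mul_div_cancel' hdvd).symm) hSabs hkey.1
  -- enumerate T
  set l : List ℂ := T.toList with hldef
  have hlen : n / k = l.length := by rw [hldef, Multiset.length_toList, hTcard]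
  set b : Fin (n / k) → ℂ := fun i => l.get (Fin.cast hlen i) with hbdef
  refine ⟨hdvd, c', b, hc'_abs, ?_, ?_⟩
  · intro i
    apply hTabs
    rw [← Multiset.mem_toList]
    exact List.get_mem l _
  · intro z hz
    have hzb : ‖z‖ < 1 := (hball z).1 hz
    have hwb : ‖(φ z)‖ < 1 := abs_phi_lt γ z hγ hzb
    rw [hBφ z hzb, hTprod (φ z) hwb]
    congr 1
    have hT : T = (↑l : Multiset ℂ) := (Multiset.coe_toList T).symm
    rw [hT, Multiset.map_coe, Multiset.prod_coe]
    have hl : l = List.ofFn l.get := (List.ofFn_get l).symm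
    conv_lhs => rw [hl]
    rw [List.map_ofFn, List.prod_ofFn]
    refine (Fintype.prod_equiv (finCongr hlen) _ _ (fun i => ?_)).symm
    rfl
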